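/- arXiv:2605.20345 — 2 statements merged into one kernel-verified Lean document; each statement's English description precedes it below -/
import Mathlib

section
/- Let d ≥ 1, let g : ℝ^d → ℝ be a probability density with g(z) > 0 for all z, let f : ℝ^d → ℝ be a nonnegative Lebesgue-integrable function, and let φ : ℝ^d → ℝ be a nonnegative bounded measurable function. Define the importance weight w(z) = f(z)/g(z). Then for every n ≥ 1, ∫_{(ℝ^d)^n} [ (∑_{i=1}^n w(z_i) φ(z_i)) / (∑_{j=1}^n w(z_j)) ] · [ (1/n) ∑_{j=1}^n w(z_j) ] · ∏_{k=1}^n g(z_k) dz_1 ⋯ dz_n = ∫_{ℝ^d} φ(z) f(z) dz, where the ratio is taken to be 0 whenever its denominator is 0. (This is Proposition 5 tested against φ: drawing z from the self-normalized discrete distribution ∑_i w_i δ_{z_i} / ∑_j w_j under the weighted joint π̂(θ, z_{1:n}, y) = ((1/n)∑_i w_i) π̂(z_{1:n}|θ,y) recovers the true joint π(θ, z, y) with f(z) = π(θ)π(z|θ)π(y|θ,z).) -/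
open MeasureTheory

/-- **Proposition 5** (recovery of the marginalized variable), tested against a
nonnegative bounded measurable function `φ`. With importance weights
`w z = f z / g z` (where `g` is an everywhere-positive probability density and
`f` is nonnegative and integrable), sampling from the self-normalized discrete
distribution under the weighted joint recovers `∫ φ z * f z dz`:
`∫ [(∑ i, w (z i) φ (z i)) / (∑ j, w (z j))] · [(1/n) ∑ j, w (z j)] · ∏ k, g (z k) dz
  = ∫ φ z * f z dz` (with the convention that the ratio is `0` when its
denominator is `0`, which is Lean's convention for division by zero). -/
theorem self_normalized_recovery_unbiased
    (d : ℕ) (hd : 1 ≤ d)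
    (g : (Fin d → ℝ) → ℝ) (hg_meas : Measurable g)
    (hg_nonneg : ∀ z, 0 ≤ g z) (hg_prob : ∫ z, g z = 1)
    (hg_pos : ∀ z, 0 < g z)
    (f : (Fin d → ℝ) → ℝ) (hf_nonneg : ∀ z, 0 ≤ f z)
    (hf_int : Integrable f)
    (φ : (Fin d → ℝ) → ℝ) (hφ_meas : Measurable φ)
    (hφ_nonneg : ∀ z, 0 ≤ φ z) (C : ℝ) (hφ_bdd : ∀ z, φ z ≤ C)
    (n : ℕ) (hn : 1 ≤ n) :
    ∫ z : Fin n → (Fin d → ℝ),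
        ((∑ i : Fin n, (f (z i) / g (z i)) * φ (z i)) /
            (∑ j : Fin n, f (z j) / g (z j))) *
          ((1 / (n : ℝ)) * ∑ j : Fin n, f (z j) / g (z j)) *
          ∏ k : Fin n, g (z k)
      = ∫ z, φ z * f z := by
  have hn0 : (n : ℝ) ≠ 0 := Nat.cast_ne_zero.mpr (by omega)
  have hg_int : Integrable g := by
    by_contra h
    rw [integral_undef h] at hg_prob
    exact one_ne_zero hg_prob.symm
  have hφf_int : Integrable (fun z => φ z * f z) :=
    hf_int.bdd_mul hφ_meas.aestronglyMeasurable
      (c := C) (Filter.Eventually.of_forall fun z => by rw [Real.norm_eq_abs, abs_of_nonneg (hφ_nonneg z)]; exact hφ_bdd z)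
  set H : Fin n → Fin n → (Fin d → ℝ) → ℝ :=
    fun i k => if k = i then (fun z => (1 / (n : ℝ)) * (φ z * f z)) else g with hH
  have H_int : ∀ i k, Integrable (H i k) := by
    intro i k
    by_cases h : k = i
    · simpa [hH, h] using hφf_int.const_mul (1 / (n : ℝ))
    · simpa [hH, h] using hg_int
  have key : ∀ z : Fin n → (Fin d → ℝ),
      ((∑ i : Fin n, (f (z i) / g (z i)) * φ (z i)) /
            (∑ j : Fin n, f (z j) / g (z j))) *
          ((1 / (n : ℝ)) * ∑ j : Fin n, f (z j) / g (z j)) *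
          ∏ k : Fin n, g (z k)
        = ∑ i : Fin n, ∏ k : Fin n, H i k (z k) := by
    intro z
    have hterm : ∀ i : Fin n, ∏ k : Fin n, H i k (z k)
        = (1 / (n : ℝ)) * ((f (z i) / g (z i)) * φ (z i)) * ∏ k : Fin n, g (z k) := by
      intro i
      rw [← Finset.mul_prod_erase Finset.univ (fun k => H i k (z k)) (Finset.mem_univ i),
          ← Finset.mul_prod_erase Finset.univ (fun k => g (z k)) (Finset.mem_univ i)]
      have h1 : ∏ k ∈ Finset.univ.erase i, H i k (z k)
          = ∏ k ∈ Finset.univ.erase i, g (z k) :=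
        Finset.prod_congr rfl (fun k hk => by
          simp [hH, (Finset.mem_erase.mp hk).1])
      rw [h1]
      have hg_ne : g (z i) ≠ 0 := (hg_pos _).ne'
      simp only [hH, if_pos rfl]
      field_simp
    rw [Finset.sum_congr rfl (fun i _ => hterm i), ← Finset.sum_mul, ← Finset.mul_sum]
    by_cases hS : (∑ j : Fin n, f (z j) / g (z j)) = 0
    · have hall : ∀ j : Fin n, f (z j) / g (z j) = 0 := by
        intro j
        exact (Finset.sum_eq_zero_iff_of_nonneg
          (fun j _ => div_nonneg (hf_nonneg _) (hg_nonneg _))).mp hS j (Finset.mem_univ j)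
      have hA : (∑ i : Fin n, (f (z i) / g (z i)) * φ (z i)) = 0 :=
        Finset.sum_eq_zero (fun i _ => by rw [hall i, zero_mul])
      rw [hS, hA]
      simp
    · have h3 : (∑ i : Fin n, (f (z i) / g (z i)) * φ (z i)) /
          (∑ j : Fin n, f (z j) / g (z j)) *
          ((1 / (n : ℝ)) * ∑ j : Fin n, f (z j) / g (z j))
          = (1 / (n : ℝ)) * ∑ i : Fin n, (f (z i) / g (z i)) * φ (z i) := by
        field_simp
      rw [h3]
  rw [integral_congr_ae (Filter.Eventually.of_forall key)]
  rw [integral_finset_sum (μ := volume) _ (fun i _ => (Integrable.fintype_prod (f := H i) (fun k => H_int i k) :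
    Integrable (fun z : Fin n → (Fin d → ℝ) => ∏ k : Fin n, H i k (z k)) volume))]
  have hone : ∀ i : Fin n, (∫ z : Fin n → (Fin d → ℝ), ∏ k : Fin n, H i k (z k))
      = (1 / (n : ℝ)) * ∫ z, φ z * f z := by
    intro i
    rw [integral_fin_nat_prod_volume_eq_prod (fun k => H i k)]
    rw [← Finset.mul_prod_erase Finset.univ _ (Finset.mem_univ i)]
    have h2 : ∏ k ∈ Finset.univ.erase i, (∫ x, H i k x) = 1 := by
      refine Finset.prod_eq_one (fun k hk => ?_)
      have : H i k = g := by
        funext x; simp [hH, (Finset.mem_erase.mp hk).1]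
      rw [this, hg_prob]
    rw [h2, mul_one]
    simp only [hH, if_pos rfl]
    rw [integral_const_mul]
  rw [Finset.sum_congr rfl (fun i _ => hone i), Finset.sum_const, Finset.card_univ,
    Fintype.card_fin, nsmul_eq_mul]
  field_simp
end

section
/- Let d ≥ 1, let K be an invertible real d×d matrix, let c : ℝ × ℝ^d → ℝ^d be differentiable at the point (η₀, ẑ(η₀)), with partial derivative in the first argument equal to a vector c_η ∈ ℝ^d and partial derivative in the second argument equal to the linear map v ↦ −W v for a d×d matrix W, and let ẑ : ℝ → ℝ^d be differentiable at η₀ and satisfy ẑ(η) = K · c(η, ẑ(η)) for all η in a neighborhood of η₀. If K⁻¹ + W is invertible, then ẑ'(η₀) = (K⁻¹ + W)⁻¹ · c_η. (This is the implicit-function-theorem computation of ∂ẑ/∂η_i in the adjoint-differentiated Laplace approximation, where c(η, z) = ∇_z log π(y|η,z).) -/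
open Topology

/-- Implicit-function-theorem computation of `∂ẑ/∂η` in the
adjoint-differentiated Laplace approximation. If `K` is invertible,
`c : ℝ × ℝ^d → ℝ^d` is differentiable at `(η₀, zhat η₀)` with partial
derivative `c_η` in the first argument and partial derivative `v ↦ −W v` in
the second argument, `zhat` is differentiable at `η₀` and satisfies
`zhat η = K · c (η, zhat η)` near `η₀`, and `K⁻¹ + W` is invertible, then
`zhat'(η₀) = (K⁻¹ + W)⁻¹ · c_η`. -/
theorem laplace_mode_derivative_eta
    (d : ℕ) (hd : 1 ≤ d)
    (K : Matrix (Fin d) (Fin d) ℝ) (hK : IsUnit K)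
    (c : ℝ → (Fin d → ℝ) → (Fin d → ℝ))
    (cη : Fin d → ℝ) (W : Matrix (Fin d) (Fin d) ℝ)
    (η₀ : ℝ) (zhat : ℝ → (Fin d → ℝ))
    (hc_diff : DifferentiableAt ℝ (fun p : ℝ × (Fin d → ℝ) => c p.1 p.2) (η₀, zhat η₀))
    (hc_fst : HasDerivAt (fun η => c η (zhat η₀)) cη η₀)
    (hc_snd : HasFDerivAt (fun z => c η₀ z)
      (LinearMap.toContinuousLinearMap ((-W).mulVecLin)) (zhat η₀))
    (hzhat : DifferentiableAt ℝ zhat η₀)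
    (hfix : ∀ᶠ η in 𝓝 η₀, zhat η = K.mulVec (c η (zhat η)))
    (hunit : IsUnit (K⁻¹ + W)) :
    deriv zhat η₀ = ((K⁻¹ + W)⁻¹).mulVec cη := by
  set z' := deriv zhat η₀ with hz'
  set D := fderiv ℝ (fun p : ℝ × (Fin d → ℝ) => c p.1 p.2) (η₀, zhat η₀) with hD
  have hDf : HasFDerivAt (fun p : ℝ × (Fin d → ℝ) => c p.1 p.2) D (η₀, zhat η₀) :=
    hc_diff.hasFDerivAt
  -- partial derivative in first argument
  have hinner1 : HasDerivAt (fun η : ℝ => (η, zhat η₀)) ((1 : ℝ), (0 : Fin d → ℝ)) η₀ :=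
    HasDerivAt.prodMk (hasDerivAt_id η₀) (hasDerivAt_const η₀ _)
  have hfst : HasDerivAt (fun η => c η (zhat η₀)) (D (1, 0)) η₀ :=
    by have h := hDf.comp_hasDerivAt η₀ hinner1; exact h
  have hcη : cη = D (1, 0) := hc_fst.unique hfst
  -- partial derivative in second argument
  have hinner2 : HasFDerivAt (fun z : Fin d → ℝ => ((η₀ : ℝ), z))
      ((0 : (Fin d → ℝ) →L[ℝ] ℝ).prod (ContinuousLinearMap.id ℝ _)) (zhat η₀) :=
    HasFDerivAt.prodMk (hasFDerivAt_const η₀ _) (hasFDerivAt_id _)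
  have hsnd : HasFDerivAt (fun z => c η₀ z)
      (D.comp ((0 : (Fin d → ℝ) →L[ℝ] ℝ).prod (ContinuousLinearMap.id ℝ _))) (zhat η₀) :=
    hDf.comp _ hinner2
  have hW : ∀ v : Fin d → ℝ, (-W).mulVec v = D (0, v) := by
    intro v
    have := hc_snd.unique hsnd
    have := congrArg (fun L : (Fin d → ℝ) →L[ℝ] (Fin d → ℝ) => L v) this
    rw [Matrix.neg_mulVec]
    simpa using this
  -- derivative of the fixed-point equation
  have hz : HasDerivAt zhat z' η₀ := hzhat.hasDerivAt
  have hcomp : HasDerivAt (fun η => c η (zhat η)) (D (1, z')) η₀ :=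
    by have h := hDf.comp_hasDerivAt η₀ (HasDerivAt.prodMk (hasDerivAt_id η₀) hz); exact h
  have hK' : HasDerivAt (fun η => K.mulVec (c η (zhat η))) (K.mulVec (D (1, z'))) η₀ :=
    (LinearMap.toContinuousLinearMap K.mulVecLin).hasFDerivAt.comp_hasDerivAt η₀ hcomp
  have hz2 : HasDerivAt zhat (K.mulVec (D (1, z'))) η₀ := by
    apply hK'.congr_of_eventuallyEq hfix
  have key : z' = K.mulVec (D (1, z')) := hz.unique hz2
  have hsplit : D (1, z') = cη + (-W).mulVec z' := by
    rw [hcη, hW]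
    have : ((1 : ℝ), z') = ((1 : ℝ), (0 : Fin d → ℝ)) + ((0 : ℝ), z') := by
      simp [Prod.ext_iff]
    rw [this, map_add]
  -- algebra
  have hKinv : K⁻¹ * K = 1 := Matrix.nonsing_inv_mul K ((Matrix.isUnit_iff_isUnit_det K).mp hK)
  have h1 : K⁻¹.mulVec z' = cη + (-W).mulVec z' := by
    conv_lhs => rw [key]
    rw [← hsplit, Matrix.mulVec_mulVec, hKinv, Matrix.one_mulVec, hsplit]
  have h2 : (K⁻¹ + W).mulVec z' = cη := by
    rw [Matrix.add_mulVec]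
    rw [h1]
    simp [Matrix.neg_mulVec]
  have hInv : (K⁻¹ + W)⁻¹ * (K⁻¹ + W) = 1 :=
    Matrix.nonsing_inv_mul _ ((Matrix.isUnit_iff_isUnit_det _).mp hunit)
  rw [← h2, Matrix.mulVec_mulVec, hInv, Matrix.one_mulVec]
end
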